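/- arXiv:1708.06271 — 2 statements merged into one kernel-verified Lean document; each statement's English description precedes it below -/
import Mathlib

section
/- Let μ be a probability measure on E_Δ and σ an (M^μ_t)_{t≥0}-stopping time, and set σ_ζ := σ·I_{{σ<ζ}} + ∞·I_{{σ≥ζ}}. Then σ_ζ is an (F^{h,μ}_t)_{t≥0}-stopping time, and Λ ∩ {σ < ζ} ∈ F^{h,μ}_{σ_ζ} for every Λ ∈ M^μ_σ. -/
open MeasureTheory Set Filter
open scoped NNReal ENNReal

noncomputable section

variable {S : Type*} [MeasurableSpace S] {Ω : Type*}

/-- The natural filtration `F⁰_t = σ(X_s : s ∈ [0,t])` of the process `X`. -/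
def F0 (X : ℝ≥0 → Ω → S) (t : ℝ≥0) : MeasurableSpace Ω :=
  ⨆ s ∈ Set.Iic t, MeasurableSpace.comap (X s) inferInstance

/-- `F⁰_∞ = σ(X_s : s ≥ 0)`. -/
def F0inf (X : ℝ≥0 → Ω → S) : MeasurableSpace Ω :=
  ⨆ s : ℝ≥0, MeasurableSpace.comap (X s) inferInstance

/-- `F⁰_{t+} = ⋂_{s > t} F⁰_s`. -/
def F0plus (X : ℝ≥0 → Ω → S) (t : ℝ≥0) : MeasurableSpace Ω :=
  ⨅ s ∈ Set.Ioi t, F0 X s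

/-- The life time `ζ(ω) = inf {t ≥ 0 : X_t(ω) = Δ}` (with value `∞` if the path
never reaches the cemetery `Δ`). -/
def lifetime (Δ : S) (X : ℝ≥0 → Ω → S) (ω : Ω) : ℝ≥0∞ :=
  ⨅ (t : ℝ≥0) (_ : X t ω = Δ), (t : ℝ≥0∞)

variable (Δ : S)

/-- `Q̄_{x,t}[f ; t < ζ] := h(x)·E^h_x[e^{αt}·f/h(X_t) ; t < ζ]`, the σ-finite
distribution up to time `t` applied to a nonnegative integrand `f`. -/
def Qbar (α : ℝ) (h : S → ℝ≥0∞) (X : ℝ≥0 → Ω → S)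
    (P : S → @Measure Ω (F0inf X)) (x : S) (t : ℝ≥0) (f : Ω → ℝ≥0∞) : ℝ≥0∞ :=
  h x * ∫⁻ ω in {ω | (t : ℝ≥0∞) < lifetime Δ X ω},
      ENNReal.ofReal (Real.exp (α * (t : ℝ))) * f ω * (h (X t ω))⁻¹ ∂(P x)

/-- `Q̄_{x,t}(Λ ; t < ζ)` of a set `Λ`. -/
def QbarSet (α : ℝ) (h : S → ℝ≥0∞) (X : ℝ≥0 → Ω → S)
    (P : S → @Measure Ω (F0inf X)) (x : S) (t : ℝ≥0) (Λ : Set Ω) : ℝ≥0∞ :=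
  Qbar Δ α h X P x t (Λ.indicator 1)

/-- `Q̄_{μ,t}(Λ ; t < ζ) = ∫ Q̄_{x,t}(Λ ; t < ζ) μ(dx)` (note `Q̄_{Δ,t} = 0`
automatically since `h Δ = 0`). -/
def Qmu (α : ℝ) (h : S → ℝ≥0∞) (X : ℝ≥0 → Ω → S)
    (P : S → @Measure Ω (F0inf X)) (μ : Measure S) (t : ℝ≥0) (Λ : Set Ω) : ℝ≥0∞ :=
  ∫⁻ x, QbarSet Δ α h X P x t Λ ∂μ

/-- `P^h_μ(Λ) = ∫ P^h_x(Λ) μ(dx)`. -/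
def Pmu (X : ℝ≥0 → Ω → S) (P : S → @Measure Ω (F0inf X)) (μ : Measure S)
    (Λ : Set Ω) : ℝ≥0∞ :=
  ∫⁻ x, P x Λ ∂μ

/-- `P^h_μ(Λ ; t < ζ)`. -/
def PmuT (X : ℝ≥0 → Ω → S) (P : S → @Measure Ω (F0inf X)) (μ : Measure S)
    (t : ℝ≥0) (Λ : Set Ω) : ℝ≥0∞ :=
  ∫⁻ x, P x (Λ ∩ {ω | (t : ℝ≥0∞) < lifetime Δ X ω}) ∂μ

/-- The augmented σ-field `M^μ_t`. -/
def Mmu (α : ℝ) (h : S → ℝ≥0∞) (X : ℝ≥0 → Ω → S)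
    (P : S → @Measure Ω (F0inf X)) (μ : Measure S) (t : ℝ≥0) : Set (Set Ω) :=
  {Λ | ∃ Λ' Γ : Set Ω, MeasurableSet[F0 X t] Λ' ∧ MeasurableSet[F0plus X t] Γ ∧
      symmDiff Λ Λ' ⊆ Γ ∧ ∀ T : ℝ≥0, t < T → Qmu Δ α h X P μ T Γ = 0}

/-- The auxiliary family `G^{μ,1}_t`. -/
def Gmu1 (α : ℝ) (h : S → ℝ≥0∞) (X : ℝ≥0 → Ω → S)
    (P : S → @Measure Ω (F0inf X)) (μ : Measure S) (t : ℝ≥0) : Set (Set Ω) :=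
  {Λ | ∃ Λ' Γ : Set Ω, MeasurableSet[F0 X t] Λ' ∧ MeasurableSet[F0plus X t] Γ ∧
      symmDiff Λ Λ' ⊆ Γ ∧ PmuT Δ X P μ t Γ = 0}

/-- The auxiliary family `G^{μ,2}_t`. -/
def Gmu2 (α : ℝ) (h : S → ℝ≥0∞) (X : ℝ≥0 → Ω → S)
    (P : S → @Measure Ω (F0inf X)) (μ : Measure S) (t : ℝ≥0) : Set (Set Ω) :=
  {Λ | ∃ Λ' Γ : Set Ω, MeasurableSet[F0plus X t] Λ' ∧ MeasurableSet[F0plus X t] Γ ∧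
      symmDiff Λ Λ' ⊆ Γ ∧ PmuT Δ X P μ t Γ = 0}

/-- The `P^h_μ`-augmentation `F^{h,μ}_t` of `F⁰_t` in `F⁰_∞`. -/
def Fhmu (X : ℝ≥0 → Ω → S) (P : S → @Measure Ω (F0inf X)) (μ : Measure S)
    (t : ℝ≥0) : Set (Set Ω) :=
  {Λ | ∃ Λ' Γ : Set Ω, MeasurableSet[F0 X t] Λ' ∧ MeasurableSet[F0inf X] Γ ∧
      symmDiff Λ Λ' ⊆ Γ ∧ Pmu X P μ Γ = 0}

/-- `M_t = ⋂_μ M^μ_t`, the intersection over all probability measures `μ` on `E_Δ`. -/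
def Mt (α : ℝ) (h : S → ℝ≥0∞) (X : ℝ≥0 → Ω → S)
    (P : S → @Measure Ω (F0inf X)) (t : ℝ≥0) : Set (Set Ω) :=
  {Λ | ∀ μ : Measure S, IsProbabilityMeasure μ → Λ ∈ Mmu Δ α h X P μ t}

/-- `M_∞ = σ(⋃_t M_t)`. -/
def Minf (α : ℝ) (h : S → ℝ≥0∞) (X : ℝ≥0 → Ω → S)
    (P : S → @Measure Ω (F0inf X)) : MeasurableSpace Ω :=
  MeasurableSpace.generateFrom {Λ | ∃ t : ℝ≥0, Λ ∈ Mt Δ α h X P t}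

/-- `M^μ_∞ = σ(⋃_t M^μ_t)`. -/
def Mmuinf (α : ℝ) (h : S → ℝ≥0∞) (X : ℝ≥0 → Ω → S)
    (P : S → @Measure Ω (F0inf X)) (μ : Measure S) : MeasurableSpace Ω :=
  MeasurableSpace.generateFrom {Λ | ∃ t : ℝ≥0, Λ ∈ Mmu Δ α h X P μ t}

/-- `M_σ` for an `(M_t)`-stopping time `σ`. -/
def Msigma (α : ℝ) (h : S → ℝ≥0∞) (X : ℝ≥0 → Ω → S)
    (P : S → @Measure Ω (F0inf X)) (σ : Ω → ℝ≥0∞) : Set (Set Ω) :=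
  {Λ | MeasurableSet[Minf Δ α h X P] Λ ∧
      ∀ t : ℝ≥0, Λ ∩ {ω | σ ω ≤ (t : ℝ≥0∞)} ∈ Mt Δ α h X P t}

/-- `M^μ_σ` for an `(M^μ_t)`-stopping time `σ`. -/
def Mmusigma (α : ℝ) (h : S → ℝ≥0∞) (X : ℝ≥0 → Ω → S)
    (P : S → @Measure Ω (F0inf X)) (μ : Measure S) (σ : Ω → ℝ≥0∞) : Set (Set Ω) :=
  {Λ | MeasurableSet[Mmuinf Δ α h X P μ] Λ ∧
      ∀ t : ℝ≥0, Λ ∩ {ω | σ ω ≤ (t : ℝ≥0∞)} ∈ Mmu Δ α h X P μ t}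

/-- `F^{h,μ}_T` for an `(F^{h,μ}_t)`-stopping time `T`. -/
def FhmuStop (X : ℝ≥0 → Ω → S) (P : S → @Measure Ω (F0inf X)) (μ : Measure S)
    (T : Ω → ℝ≥0∞) : Set (Set Ω) :=
  {Λ | ∀ t : ℝ≥0, Λ ∩ {ω | T ω ≤ (t : ℝ≥0∞)} ∈ Fhmu X P μ t}

/-- `X_σ`, with the convention `X_∞ = Δ`. -/
def Xstop (X : ℝ≥0 → Ω → S) (σ : Ω → ℝ≥0∞) (ω : Ω) : S :=
  if σ ω < ∞ then X (σ ω).toNNReal ω else Δ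

/-- The shift `θ_σ` at a random time `σ`. -/
def thetaStop (θ : ℝ≥0 → Ω → Ω) (σ : Ω → ℝ≥0∞) (ω : Ω) : Ω :=
  θ (σ ω).toNNReal ω

/-- `Q̄_{x,σ}[f ; σ < ζ] := h(x)·E^h_x[e^{ασ}·f/h(X_σ) ; σ < ζ]`, the σ-finite
distribution up to a stopping time `σ` applied to a nonnegative integrand `f`. -/
def QbarStop (α : ℝ) (h : S → ℝ≥0∞) (X : ℝ≥0 → Ω → S)
    (P : S → @Measure Ω (F0inf X)) (x : S) (σ : Ω → ℝ≥0∞) (f : Ω → ℝ≥0∞) : ℝ≥0∞ :=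
  h x * ∫⁻ ω in {ω | σ ω < lifetime Δ X ω},
      ENNReal.ofReal (Real.exp (α * (σ ω).toReal)) * f ω * (h (Xstop Δ X σ ω))⁻¹ ∂(P x)

/-- `Q̄_{x,σ}(Λ ; σ < ζ)` of a set `Λ`. -/
def QbarStopSet (α : ℝ) (h : S → ℝ≥0∞) (X : ℝ≥0 → Ω → S)
    (P : S → @Measure Ω (F0inf X)) (x : S) (σ : Ω → ℝ≥0∞) (Λ : Set Ω) : ℝ≥0∞ :=
  QbarStop Δ α h X P x σ (Λ.indicator 1)

/-- The entrance time `D_B = inf {t ≥ 0 : X_t ∈ B}`. -/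
def entranceTime (B : Set S) (X : ℝ≥0 → Ω → S) (ω : Ω) : ℝ≥0∞ :=
  ⨅ (t : ℝ≥0) (_ : X t ω ∈ B), (t : ℝ≥0∞)

/-- The hitting time `σ_B = inf {t > 0 : X_t ∈ B}`. -/
def hittingTime (B : Set S) (X : ℝ≥0 → Ω → S) (ω : Ω) : ℝ≥0∞ :=
  ⨅ (t : ℝ≥0) (_ : 0 < t ∧ X t ω ∈ B), (t : ℝ≥0∞)

/-- A set is universally measurable (`∈ B(E_Δ)*`) if it lies in the completion of
`B(E_Δ)` with respect to every probability measure. -/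
def UniversallyMeasurableSet (A : Set S) : Prop :=
  ∀ ν : Measure S, IsProbabilityMeasure ν → NullMeasurableSet A ν

/-- Iterated kernel integral
`∫ κ_{t₁-t₀}(x,dx₁) ∫ κ_{t₂-t₁}(x₁,dx₂) ⋯ f(x₁,…,xₙ)`, where `t₀` is the
starting time. -/
def iterK (κ : ℝ≥0 → S → Measure S) :
    (n : ℕ) → (Fin (n + 1) → ℝ≥0) → ℝ≥0 → S → ((Fin (n + 1) → S) → ℝ≥0∞) → ℝ≥0∞
  | 0, t, t0, x, f => ∫⁻ y, f (fun _ => y) ∂(κ (t 0 - t0) x)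
  | n + 1, t, t0, x, f =>
      ∫⁻ y, iterK κ n (fun i => t i.succ) (t 0) y (fun v => f (Fin.cons y v))
        ∂(κ (t 0 - t0) x)


/-- `γ = (σ + τ∘θ_σ)_ζ`, the time `σ + τ∘θ_σ` truncated to `∞` off `{σ + τ∘θ_σ < ζ}`. -/
def gammaTime (Δ : S) (X : ℝ≥0 → Ω → S) (θ : ℝ≥0 → Ω → Ω) (σ τ : Ω → ℝ≥0∞)
    (ω : Ω) : ℝ≥0∞ :=
  if σ ω + τ (thetaStop θ σ ω) < lifetime Δ X ω then σ ω + τ (thetaStop θ σ ω)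
  else ∞

end



/- ===================== auxiliary development ===================== -/

section Aux

variable {S : Type*} [MeasurableSpace S] {Ω : Type*} {Δ : S} {X : ℝ≥0 → Ω → S}

/-- Monotonicity of measurable sets along `≤` of σ-algebras. -/
lemma msMono {m m' : MeasurableSpace Ω} (hle : m ≤ m') {s : Set Ω}
    (hs : MeasurableSet[m] s) : MeasurableSet[m'] s := hle s hs

lemma F0_mono {s t : ℝ≥0} (hst : s ≤ t) : F0 X s ≤ F0 X t := by
  apply biSup_mono
  exact fun u hu => le_trans hu hst

lemma F0_le_F0inf (t : ℝ≥0) : F0 X t ≤ F0inf X :=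
  iSup₂_le fun s _ => le_iSup (fun u => MeasurableSpace.comap (X u) inferInstance) s

lemma F0_le_F0plus (t : ℝ≥0) : F0 X t ≤ F0plus X t :=
  le_iInf₂ fun s hs => F0_mono (le_of_lt hs)

lemma F0plus_le_F0inf (t : ℝ≥0) : F0plus X t ≤ F0inf X :=
  le_trans (biInf_le (fun s => F0 X s) (mem_Ioi.mpr (lt_add_one t))) (F0_le_F0inf (t + 1))

lemma measSet_preX {s : ℝ≥0} {B : Set S} (hB : MeasurableSet B) :
    MeasurableSet[F0inf X] (X s ⁻¹' B) :=
  msMono (le_iSup (fun u => MeasurableSpace.comap (X u) inferInstance) s) ⟨B, hB, rfl⟩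

lemma measSet_preX_F0 {s t : ℝ≥0} (hst : s ≤ t) {B : Set S} (hB : MeasurableSet B) :
    MeasurableSet[F0 X t] (X s ⁻¹' B) :=
  msMono (le_biSup (fun u => MeasurableSpace.comap (X u) inferInstance) (mem_Iic.mpr hst))
    ⟨B, hB, rfl⟩

section Absorb

/-- If `X s ω ≠ Δ` then `s ≤ ζ(ω)`. -/
lemma le_lifetime (habs : ∀ (ω : Ω) (s t : ℝ≥0), s ≤ t → X s ω = Δ → X t ω = Δ) {s : ℝ≥0} {ω : Ω} (hne : X s ω ≠ Δ) :
    (s : ℝ≥0∞) ≤ lifetime Δ X ω := by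
  refine le_iInf₂ fun t ht => ?_
  rw [ENNReal.coe_le_coe]
  by_contra hts
  exact hne (habs ω t s (le_of_lt (not_le.mp hts)) ht)

/-- If `t < ζ(ω)` then `X t ω ≠ Δ`. -/
lemma ne_of_lt_lifetime (habs : ∀ (ω : Ω) (s t : ℝ≥0), s ≤ t → X s ω = Δ → X t ω = Δ) {t : ℝ≥0} {ω : Ω} (hlt : (t : ℝ≥0∞) < lifetime Δ X ω) :
    X t ω ≠ Δ := by
  intro he
  exact absurd (iInf₂_le t he) (not_le.mpr hlt)

lemma lifetime_le_iff (habs : ∀ (ω : Ω) (s t : ℝ≥0), s ≤ t → X s ω = Δ → X t ω = Δ) {r : ℝ≥0} {ω : Ω} :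
    lifetime Δ X ω ≤ (r : ℝ≥0∞) ↔ ∀ s : ℝ≥0, r < s → X s ω = Δ := by
  constructor
  · intro hle s hrs
    have hlt : lifetime Δ X ω < (s : ℝ≥0∞) :=
      lt_of_le_of_lt hle (ENNReal.coe_lt_coe.mpr hrs)
    rw [lifetime] at hlt
    obtain ⟨u, hu⟩ := iInf_lt_iff.mp hlt
    obtain ⟨huΔ, hus⟩ := iInf_lt_iff.mp hu
    exact habs ω u s (le_of_lt (ENNReal.coe_lt_coe.mp hus)) huΔ
  · intro hall
    refine ENNReal.le_of_forall_pos_le_add fun ε hε _ => ?_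
    have : lifetime Δ X ω ≤ ((r + ε : ℝ≥0) : ℝ≥0∞) :=
      iInf₂_le (r + ε) (hall _ (lt_add_of_pos_right r hε))
    simpa [ENNReal.coe_add] using this

/-- Rational approximation of `a < ζ(ω)`. -/
lemma lt_lifetime_iff (habs : ∀ (ω : Ω) (s t : ℝ≥0), s ≤ t → X s ω = Δ → X t ω = Δ) {a : ℝ≥0∞} {ω : Ω} :
    a < lifetime Δ X ω ↔
      ∃ q : ℚ, a < ((q : ℝ).toNNReal : ℝ≥0∞) ∧ X (q : ℝ).toNNReal ω ≠ Δ := by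
  constructor
  · intro hlt
    obtain ⟨q, _, h1, h2⟩ := ENNReal.lt_iff_exists_rat_btwn.mp hlt
    exact ⟨q, h1, ne_of_lt_lifetime habs h2⟩
  · rintro ⟨q, h1, h2⟩
    exact lt_of_lt_of_le h1 (le_lifetime habs h2)

variable [MeasurableSingletonClass S]

lemma measSet_lt_lifetime (habs : ∀ (ω : Ω) (s t : ℝ≥0), s ≤ t → X s ω = Δ → X t ω = Δ) (a : ℝ≥0∞) :
    MeasurableSet[F0inf X] {ω | a < lifetime Δ X ω} := by
  have : {ω | a < lifetime Δ X ω} =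
      ⋃ q : ℚ, if a < ((q : ℝ).toNNReal : ℝ≥0∞)
        then X (q : ℝ).toNNReal ⁻¹' ({Δ}ᶜ) else ∅ := by
    ext ω
    simp only [mem_setOf_eq, mem_iUnion]
    rw [lt_lifetime_iff habs]
    constructor
    · rintro ⟨q, h1, h2⟩
      exact ⟨q, by rw [if_pos h1]; exact h2⟩
    · rintro ⟨q, hq⟩
      by_cases h1 : a < ((q : ℝ).toNNReal : ℝ≥0∞)
      · rw [if_pos h1] at hq; exact ⟨q, h1, hq⟩
      · rw [if_neg h1] at hq; exact absurd hq (notMem_empty ω)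
  rw [this]
  refine MeasurableSet.iUnion fun q => ?_
  by_cases h1 : a < ((q : ℝ).toNNReal : ℝ≥0∞)
  · rw [if_pos h1]; exact measSet_preX ((measurableSet_singleton Δ).compl)
  · rw [if_neg h1]; exact @MeasurableSet.empty Ω (F0inf X)

lemma measSet_lifetime_le (habs : ∀ (ω : Ω) (s t : ℝ≥0), s ≤ t → X s ω = Δ → X t ω = Δ) (a : ℝ≥0∞) :
    MeasurableSet[F0inf X] {ω | lifetime Δ X ω ≤ a} := by
  have : {ω | lifetime Δ X ω ≤ a} = {ω | a < lifetime Δ X ω}ᶜ := by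
    ext ω; simp [not_lt]
  rw [this]
  exact (measSet_lt_lifetime habs a).compl

/-- `{ζ ≤ r}` is `F⁰_s`-measurable for any `s > r`. -/
lemma lifetime_le_mem_F0 (habs : ∀ (ω : Ω) (s t : ℝ≥0), s ≤ t → X s ω = Δ → X t ω = Δ) {r s : ℝ≥0} (hrs : r < s) :
    MeasurableSet[F0 X s] {ω | lifetime Δ X ω ≤ (r : ℝ≥0∞)} := by
  have hset : {ω | lifetime Δ X ω ≤ (r : ℝ≥0∞)} =
      ⋂ q : ℚ, if r < (q : ℝ).toNNReal ∧ (q : ℝ).toNNReal ≤ s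
        then X (q : ℝ).toNNReal ⁻¹' {Δ} else univ := by
    ext ω
    simp only [mem_setOf_eq, mem_iInter]
    constructor
    · intro hle q
      by_cases hq : r < (q : ℝ).toNNReal ∧ (q : ℝ).toNNReal ≤ s
      · rw [if_pos hq]
        exact (lifetime_le_iff habs).mp hle _ hq.1
      · rw [if_neg hq]; trivial
    · intro hall
      rw [lifetime_le_iff habs]
      intro u hru
      have hrm : (r : ℝ) < (min u s : ℝ≥0) := by
        have : r < min u s := lt_min hru hrs
        exact_mod_cast this
      obtain ⟨q, hq1, hq2⟩ := exists_rat_btwn hrm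
      have hq0 : (0:ℝ) ≤ (q:ℝ) := le_trans r.coe_nonneg (le_of_lt hq1)
      have h1 : r < (q : ℝ).toNNReal := by
        rw [← Real.toNNReal_coe (r := r)]
        exact Real.toNNReal_lt_toNNReal_iff_of_nonneg r.coe_nonneg |>.mpr hq1
      have h2 : (q : ℝ).toNNReal < min u s := by
        rw [← Real.toNNReal_coe (r := min u s)]
        exact Real.toNNReal_lt_toNNReal_iff_of_nonneg hq0 |>.mpr hq2
      have hcond : r < (q : ℝ).toNNReal ∧ (q : ℝ).toNNReal ≤ s :=
        ⟨h1, le_of_lt (lt_of_lt_of_le h2 (min_le_right u s))⟩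
      have := hall q
      rw [if_pos hcond] at this
      exact habs ω _ u (le_of_lt (lt_of_lt_of_le h2 (min_le_left u s))) this
  rw [hset]
  refine MeasurableSet.iInter fun q => ?_
  by_cases hq : r < (q : ℝ).toNNReal ∧ (q : ℝ).toNNReal ≤ s
  · rw [if_pos hq]
    exact measSet_preX_F0 hq.2 (measurableSet_singleton Δ)
  · rw [if_neg hq]; exact @MeasurableSet.univ Ω (F0 X s)

lemma lifetime_le_mem_F0plus (habs : ∀ (ω : Ω) (s t : ℝ≥0), s ≤ t → X s ω = Δ → X t ω = Δ) (r : ℝ≥0) :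
    MeasurableSet[F0plus X r] {ω | lifetime Δ X ω ≤ (r : ℝ≥0∞)} := by
  rw [F0plus, MeasurableSpace.measurableSet_iInf]
  intro s
  rw [MeasurableSpace.measurableSet_iInf]
  intro hs
  exact lifetime_le_mem_F0 habs hs

/-- The key shift identity for the life time. -/
lemma lifetime_shift (habs : ∀ (ω : Ω) (s t : ℝ≥0), s ≤ t → X s ω = Δ → X t ω = Δ) {θ : ℝ≥0 → Ω → Ω}
    (hshift : ∀ (s t : ℝ≥0) (ω : Ω), X t (θ s ω) = X (t + s) ω) (t : ℝ≥0) (ω : Ω) :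
    lifetime Δ X (θ t ω) ≤ (0 : ℝ≥0∞) ↔ lifetime Δ X ω ≤ (t : ℝ≥0∞) := by
  have h0 : ((0 : ℝ≥0) : ℝ≥0∞) = (0 : ℝ≥0∞) := rfl
  rw [← h0, lifetime_le_iff habs, lifetime_le_iff habs]
  constructor
  · intro hall u htu
    have hpos : (0:ℝ≥0) < u - t := tsub_pos_of_lt htu
    have := hall (u - t) hpos
    rw [hshift t (u - t) ω, tsub_add_cancel_of_le (le_of_lt htu)] at this
    exact this
  · intro hall s hs
    have := hall (s + t) (lt_add_of_pos_left t hs)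
    rw [hshift t s ω]
    exact this

end Absorb

end Aux


section Meas

variable {S : Type*} [MeasurableSpace S] [MeasurableSingletonClass S] {Ω : Type*}
variable {Δ : S} {X : ℝ≥0 → Ω → S} {θ : ℝ≥0 → Ω → Ω} {P : S → @Measure Ω (F0inf X)}
variable {h : S → ℝ≥0∞} {α : ℝ}

lemma indicator_one_congr {A C : Set Ω} {a c : Ω} (hiff : a ∈ A ↔ c ∈ C) :
    A.indicator (1 : Ω → ℝ≥0∞) a = C.indicator 1 c := by
  by_cases hx : a ∈ A
  · rw [Set.indicator_of_mem hx, Set.indicator_of_mem (hiff.mp hx)]; rfl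
  · rw [Set.indicator_of_notMem hx, Set.indicator_of_notMem fun hc => hx (hiff.mpr hc)]

lemma setLIntegral_indicator_one' {m : MeasurableSpace Ω} {μ : Measure Ω} {A L : Set Ω}
    (hA : MeasurableSet A) :
    ∫⁻ ω in L, A.indicator (1 : Ω → ℝ≥0∞) ω ∂μ = μ (A ∩ L) := by
  rw [← Measure.restrict_apply hA]
  exact lintegral_indicator_one hA

/-- Blumenthal zero-one law for the event `{ζ = 0}`. -/
lemma blumenthal
    (habs : ∀ (ω : Ω) (s t : ℝ≥0), s ≤ t → X s ω = Δ → X t ω = Δ)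
    (hshift : ∀ (s t : ℝ≥0) (ω : Ω), X t (θ s ω) = X (t + s) ω)
    (hP_prob : ∀ x : S, IsProbabilityMeasure (P x))
    (hP_start : ∀ x : S, P x {ω | X 0 ω = x} = 1)
    (hMarkov : ∀ (s : ℝ≥0) (x : S) (Y : Ω → ℝ≥0∞), Measurable[F0inf X] Y →
      ∀ Λ : Set Ω, MeasurableSet[F0plus X s] Λ →
        ∫⁻ ω in Λ, Y (θ s ω) ∂(P x) = ∫⁻ ω in Λ, (∫⁻ ω', Y ω' ∂(P (X s ω))) ∂(P x))
    (x : S) :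
    P x {ω | lifetime Δ X ω ≤ (0 : ℝ≥0∞)} = 0 ∨
      P x {ω | lifetime Δ X ω ≤ (0 : ℝ≥0∞)} = 1 := by
  letI : MeasurableSpace Ω := F0inf X
  haveI := hP_prob x
  set Z : Set Ω := {ω | lifetime Δ X ω ≤ (0 : ℝ≥0∞)} with hZdef
  have hZ : MeasurableSet[F0inf X] Z := measSet_lifetime_le habs 0
  have hZplus : MeasurableSet[F0plus X 0] Z := by
    have := lifetime_le_mem_F0plus habs (X := X) (Δ := Δ) 0
    simp only [ENNReal.coe_zero] at this
    exact this
  have hY : Measurable[F0inf X] (Z.indicator (1 : Ω → ℝ≥0∞)) := measurable_one.indicator hZ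
  have hM := hMarkov 0 x (Z.indicator 1) hY Z hZplus
  have hθ : ∀ ω, Z.indicator (1 : Ω → ℝ≥0∞) (θ 0 ω) = Z.indicator 1 ω := by
    intro ω
    refine indicator_one_congr ?_
    have := lifetime_shift habs hshift 0 ω
    simp only [hZdef, mem_setOf_eq]
    simpa using this
  have hL : ∫⁻ ω in Z, Z.indicator (1 : Ω → ℝ≥0∞) (θ 0 ω) ∂(P x) = P x Z := by
    rw [lintegral_congr fun ω => hθ ω, setLIntegral_indicator_one' hZ, inter_self]
  have hstart_ae : ∀ᵐ ω ∂(P x), X 0 ω = x := by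
    have hm : MeasurableSet[F0inf X] {ω | X 0 ω = x} :=
      measSet_preX (measurableSet_singleton x)
    have h1 : P x {ω | X 0 ω = x}ᶜ = 0 := by
      rw [measure_compl hm (measure_ne_top _ _), measure_univ, hP_start x, tsub_self]
    exact ae_iff.mpr h1
  have hR : ∫⁻ ω in Z, (∫⁻ ω', Z.indicator (1 : Ω → ℝ≥0∞) ω' ∂(P (X 0 ω))) ∂(P x)
      = P x Z * P x Z := by
    have hcongr : (fun ω => ∫⁻ ω', Z.indicator (1 : Ω → ℝ≥0∞) ω' ∂(P (X 0 ω)))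
        =ᵐ[(P x).restrict Z] (fun _ => P x Z) := by
      refine ae_restrict_of_ae ?_
      filter_upwards [hstart_ae] with ω hω
      rw [lintegral_indicator_one hZ, hω]
    rw [lintegral_congr_ae hcongr, setLIntegral_const]
  rw [hL, hR] at hM
  by_cases h0 : P x Z = 0
  · exact Or.inl h0
  · refine Or.inr ?_
    have h1 : P x Z * 1 = P x Z * P x Z := by rw [mul_one]; exact hM
    exact ((ENNReal.mul_right_inj h0 (measure_ne_top _ _)).mp h1).symm

/-- The two "bad boundary" events are null for every starting point. -/
lemma nbad_null
    (habs : ∀ (ω : Ω) (s t : ℝ≥0), s ≤ t → X s ω = Δ → X t ω = Δ)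
    (hshift : ∀ (s t : ℝ≥0) (ω : Ω), X t (θ s ω) = X (t + s) ω)
    (hP_prob : ∀ x : S, IsProbabilityMeasure (P x))
    (hP_meas : ∀ Λ : Set Ω, MeasurableSet[F0inf X] Λ → Measurable fun x => P x Λ)
    (hP_start : ∀ x : S, P x {ω | X 0 ω = x} = 1)
    (hMarkov : ∀ (s : ℝ≥0) (x : S) (Y : Ω → ℝ≥0∞), Measurable[F0inf X] Y →
      ∀ Λ : Set Ω, MeasurableSet[F0plus X s] Λ →
        ∫⁻ ω in Λ, Y (θ s ω) ∂(P x) = ∫⁻ ω in Λ, (∫⁻ ω', Y ω' ∂(P (X s ω))) ∂(P x))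
    (t : ℝ≥0) (x : S) :
    P x (({ω | (t : ℝ≥0∞) < lifetime Δ X ω}
          ∩ X t ⁻¹' {y | P y {ω | lifetime Δ X ω ≤ (0 : ℝ≥0∞)} ≠ 0})
        ∪ ({ω | (t : ℝ≥0∞) < lifetime Δ X ω}ᶜ
          ∩ X t ⁻¹' {y | P y {ω | lifetime Δ X ω ≤ (0 : ℝ≥0∞)} ≠ 0}ᶜ)) = 0 := by
  letI : MeasurableSpace Ω := F0inf X
  haveI := hP_prob x
  set Z : Set Ω := {ω | lifetime Δ X ω ≤ (0 : ℝ≥0∞)} with hZdef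
  set B : Set S := {y | P y Z ≠ 0} with hBdef
  have hZ : MeasurableSet[F0inf X] Z := measSet_lifetime_le habs 0
  have hB : MeasurableSet B := (hP_meas Z hZ) (measurableSet_singleton 0).compl
  have hBone : ∀ y, y ∈ B → P y Z = 1 := fun y hy =>
    (blumenthal habs hshift hP_prob hP_start hMarkov y).resolve_left hy
  have hBzero : ∀ y, y ∈ Bᶜ → P y Z = 0 := fun y hy => not_not.mp hy
  have hmemθ : ∀ ω, θ t ω ∈ Z ↔ lifetime Δ X ω ≤ (t : ℝ≥0∞) := by
    intro ω
    exact lifetime_shift habs hshift t ω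
  refine measure_union_null ?_ ?_
  · -- part (i)
    have hΛplus : MeasurableSet[F0plus X t] (X t ⁻¹' B) :=
      F0_le_F0plus t _ (measSet_preX_F0 le_rfl hB)
    have hΛ : MeasurableSet[F0inf X] (X t ⁻¹' B) := measSet_preX hB
    have hM := hMarkov t x (Zᶜ.indicator 1) (measurable_one.indicator hZ.compl)
      (X t ⁻¹' B) hΛplus
    have hL : ∫⁻ ω in X t ⁻¹' B, Zᶜ.indicator (1 : Ω → ℝ≥0∞) (θ t ω) ∂(P x)
        = P x ({ω | (t : ℝ≥0∞) < lifetime Δ X ω} ∩ X t ⁻¹' B) := by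
      have hpt : ∀ ω, Zᶜ.indicator (1 : Ω → ℝ≥0∞) (θ t ω)
          = ({ω | (t : ℝ≥0∞) < lifetime Δ X ω}).indicator 1 ω := by
        intro ω
        refine indicator_one_congr ?_
        rw [mem_compl_iff, hmemθ ω]
        exact not_le
      rw [lintegral_congr fun ω => hpt ω]
      exact setLIntegral_indicator_one' (measSet_lt_lifetime habs (t : ℝ≥0∞))
    have hR : ∫⁻ ω in X t ⁻¹' B, (∫⁻ ω', Zᶜ.indicator (1 : Ω → ℝ≥0∞) ω' ∂(P (X t ω))) ∂(P x)
        = 0 := by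
      have : ∀ᵐ ω ∂(P x), ω ∈ X t ⁻¹' B →
          (∫⁻ ω', Zᶜ.indicator (1 : Ω → ℝ≥0∞) ω' ∂(P (X t ω))) = 0 := by
        refine ae_of_all _ fun ω hω => ?_
        haveI := hP_prob (X t ω)
        rw [lintegral_indicator_one hZ.compl,
          measure_compl hZ (measure_ne_top _ _), measure_univ, hBone _ hω, tsub_self]
      rw [setLIntegral_congr_fun_ae hΛ this, lintegral_zero]
    rw [hL, hR] at hM
    exact hM
  · -- part (ii)
    have hΛplus : MeasurableSet[F0plus X t] (X t ⁻¹' Bᶜ) :=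
      F0_le_F0plus t _ (measSet_preX_F0 le_rfl hB.compl)
    have hΛ : MeasurableSet[F0inf X] (X t ⁻¹' Bᶜ) := measSet_preX hB.compl
    have hM := hMarkov t x (Z.indicator 1) (measurable_one.indicator hZ)
      (X t ⁻¹' Bᶜ) hΛplus
    have hL : ∫⁻ ω in X t ⁻¹' Bᶜ, Z.indicator (1 : Ω → ℝ≥0∞) (θ t ω) ∂(P x)
        = P x ({ω | (t : ℝ≥0∞) < lifetime Δ X ω}ᶜ ∩ X t ⁻¹' Bᶜ) := by
      have hpt : ∀ ω, Z.indicator (1 : Ω → ℝ≥0∞) (θ t ω)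
          = ({ω | (t : ℝ≥0∞) < lifetime Δ X ω}ᶜ).indicator 1 ω := by
        intro ω
        refine indicator_one_congr ?_
        rw [hmemθ ω, mem_compl_iff]
        exact not_lt.symm
      rw [lintegral_congr fun ω => hpt ω]
      exact setLIntegral_indicator_one' (measSet_lt_lifetime habs (t : ℝ≥0∞)).compl
    have hR : ∫⁻ ω in X t ⁻¹' Bᶜ, (∫⁻ ω', Z.indicator (1 : Ω → ℝ≥0∞) ω' ∂(P (X t ω))) ∂(P x)
        = 0 := by
      have : ∀ᵐ ω ∂(P x), ω ∈ X t ⁻¹' Bᶜ →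
          (∫⁻ ω', Z.indicator (1 : Ω → ℝ≥0∞) ω' ∂(P (X t ω))) = 0 := by
        refine ae_of_all _ fun ω hω => ?_
        rw [lintegral_indicator_one hZ]
        exact hBzero _ hω
      rw [setLIntegral_congr_fun_ae hΛ this, lintegral_zero]
    rw [hL, hR] at hM
    exact hM

/-- The elementary building block used in `qnull_pnull`. -/
def qnSet (Δ : S) (h : S → ℝ≥0∞) (X : ℝ≥0 → Ω → S) (Γ : Set Ω) (r : ℝ≥0)
    (q : ℚ) (n : ℕ) : Set Ω :=
  if r < (q : ℝ).toNNReal then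
    (Γ ∩ X (q : ℝ).toNNReal ⁻¹' {y | h y ≤ (n : ℝ≥0∞) + 1})
      ∩ {ω | (((q : ℝ).toNNReal : ℝ≥0) : ℝ≥0∞) < lifetime Δ X ω}
  else ∅

/-- Key lemma: a set that is `Q̄`-null after time `r` is `P^h_μ`-null on `{r < ζ}`,
for `μ`-a.e. starting point. -/
lemma qnull_pnull
    (habs : ∀ (ω : Ω) (s t : ℝ≥0), s ≤ t → X s ω = Δ → X t ω = Δ)
    (h_meas : Measurable h) (h_cem : h Δ = 0)
    (h_pos : ∀ x : S, x ≠ Δ → 0 < h x ∧ h x < ∞)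
    (hP_prob : ∀ x : S, IsProbabilityMeasure (P x))
    (hP_meas : ∀ Λ : Set Ω, MeasurableSet[F0inf X] Λ → Measurable fun x => P x Λ)
    (hP_start : ∀ x : S, P x {ω | X 0 ω = x} = 1)
    (μ : Measure S) {Γ : Set Ω} (hΓ : MeasurableSet[F0inf X] Γ) {r : ℝ≥0}
    (hQ : ∀ T : ℝ≥0, r < T → Qmu Δ α h X P μ T Γ = 0) :
    ∀ᵐ x ∂μ, P x (Γ ∩ {ω | (r : ℝ≥0∞) < lifetime Δ X ω}) = 0 := by
  have hfin : ∀ y : S, h y ≠ ∞ := by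
    intro y
    by_cases hy : y = Δ
    · rw [hy, h_cem]; exact ENNReal.zero_ne_top
    · exact (h_pos y hy).2.ne
  have hstep : ∀ (q : ℚ) (n : ℕ), ∀ᵐ x ∂μ, P x (qnSet Δ h X Γ r q n) = 0 := by
    intro q n
    by_cases hq : r < (q : ℝ).toNNReal
    swap
    · rw [qnSet, if_neg hq]
      exact ae_of_all _ fun x => measure_empty
    set s : ℝ≥0 := (q : ℝ).toNNReal with hsdef
    have hc0 : ENNReal.ofReal (Real.exp (α * (s : ℝ))) ≠ 0 := by
      simp [ENNReal.ofReal_eq_zero, not_le, Real.exp_pos]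
    have hcT : ENNReal.ofReal (Real.exp (α * (s : ℝ))) ≠ ∞ := ENNReal.ofReal_ne_top
    have hn1 : ((n : ℝ≥0∞) + 1)⁻¹ ≠ 0 := by
      rw [ENNReal.inv_ne_zero]
      exact ENNReal.add_ne_top.mpr ⟨ENNReal.natCast_ne_top n, ENNReal.one_ne_top⟩
    have hn1T : ((n : ℝ≥0∞) + 1)⁻¹ ≠ ∞ := by
      rw [ENNReal.inv_ne_top]
      simp
    have hKmeas : MeasurableSet[F0inf X] (Γ ∩ X s ⁻¹' {y | h y ≤ (n : ℝ≥0∞) + 1}) :=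
      hΓ.inter (measSet_preX (h_meas measurableSet_Iic))
    have hDnmeas : MeasurableSet[F0inf X]
        ((Γ ∩ X s ⁻¹' {y | h y ≤ (n : ℝ≥0∞) + 1})
          ∩ {ω | ((s : ℝ≥0) : ℝ≥0∞) < lifetime Δ X ω}) :=
      hKmeas.inter (measSet_lt_lifetime habs _)
    have hDeq : qnSet Δ h X Γ r q n
        = (Γ ∩ X s ⁻¹' {y | h y ≤ (n : ℝ≥0∞) + 1})
            ∩ {ω | ((s : ℝ≥0) : ℝ≥0∞) < lifetime Δ X ω} := by
      rw [qnSet, if_pos hq]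
    set Dn : Set Ω := (Γ ∩ X s ⁻¹' {y | h y ≤ (n : ℝ≥0∞) + 1})
        ∩ {ω | ((s : ℝ≥0) : ℝ≥0∞) < lifetime Δ X ω} with hDndef
    have key : ∀ y : S,
        ENNReal.ofReal (Real.exp (α * (s : ℝ))) * ((n : ℝ≥0∞) + 1)⁻¹ * (h y * P y Dn)
          ≤ QbarSet Δ α h X P y s Γ := by
      intro y
      have hIge : ENNReal.ofReal (Real.exp (α * (s : ℝ))) * ((n : ℝ≥0∞) + 1)⁻¹ * P y Dn
          ≤ ∫⁻ ω in {ω | ((s : ℝ≥0) : ℝ≥0∞) < lifetime Δ X ω},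
              ENNReal.ofReal (Real.exp (α * (s : ℝ))) * Γ.indicator 1 ω
                * (h (X s ω))⁻¹ ∂(P y) := by
        have hptw : ∀ ω, (Γ ∩ X s ⁻¹' {y | h y ≤ (n : ℝ≥0∞) + 1}).indicator
              (fun _ => ENNReal.ofReal (Real.exp (α * (s : ℝ))) * ((n : ℝ≥0∞) + 1)⁻¹) ω
            ≤ ENNReal.ofReal (Real.exp (α * (s : ℝ))) * Γ.indicator 1 ω
                * (h (X s ω))⁻¹ := by
          intro ω
          by_cases hω : ω ∈ Γ ∩ X s ⁻¹' {y | h y ≤ (n : ℝ≥0∞) + 1}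
          · rw [Set.indicator_of_mem hω, Set.indicator_of_mem hω.1]
            have h2 : ((n : ℝ≥0∞) + 1)⁻¹ ≤ (h (X s ω))⁻¹ := ENNReal.inv_le_inv' hω.2
            simp only [Pi.one_apply, mul_one]
            exact mul_le_mul_right h2 _
          · rw [Set.indicator_of_notMem hω]
            exact zero_le
        calc ENNReal.ofReal (Real.exp (α * (s : ℝ))) * ((n : ℝ≥0∞) + 1)⁻¹ * P y Dn
            = ∫⁻ ω in {ω | ((s : ℝ≥0) : ℝ≥0∞) < lifetime Δ X ω},
                (Γ ∩ X s ⁻¹' {y | h y ≤ (n : ℝ≥0∞) + 1}).indicator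
                  (fun _ => ENNReal.ofReal (Real.exp (α * (s : ℝ)))
                    * ((n : ℝ≥0∞) + 1)⁻¹) ω ∂(P y) := by
              rw [lintegral_indicator_const hKmeas, Measure.restrict_apply hKmeas, hDndef]
          _ ≤ _ := lintegral_mono fun ω => hptw ω
      calc ENNReal.ofReal (Real.exp (α * (s : ℝ))) * ((n : ℝ≥0∞) + 1)⁻¹ * (h y * P y Dn)
          = h y * (ENNReal.ofReal (Real.exp (α * (s : ℝ)))
              * ((n : ℝ≥0∞) + 1)⁻¹ * P y Dn) := by ring
        _ ≤ h y * ∫⁻ ω in {ω | ((s : ℝ≥0) : ℝ≥0∞) < lifetime Δ X ω},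
              ENNReal.ofReal (Real.exp (α * (s : ℝ))) * Γ.indicator 1 ω
                * (h (X s ω))⁻¹ ∂(P y) := mul_le_mul_right hIge (h y)
        _ = QbarSet Δ α h X P y s Γ := rfl
    have hint0 : ∫⁻ y, h y * P y Dn ∂μ = 0 := by
      have hQeq : Qmu Δ α h X P μ s Γ = ∫⁻ y, QbarSet Δ α h X P y s Γ ∂μ := rfl
      have hle : ENNReal.ofReal (Real.exp (α * (s : ℝ))) * ((n : ℝ≥0∞) + 1)⁻¹
          * ∫⁻ y, h y * P y Dn ∂μ ≤ Qmu Δ α h X P μ s Γ := by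
        rw [hQeq, ← lintegral_const_mul' _ _ (ENNReal.mul_ne_top hcT hn1T)]
        exact lintegral_mono fun y => key y
      rw [hQ s hq] at hle
      have hmul0 : ENNReal.ofReal (Real.exp (α * (s : ℝ))) * ((n : ℝ≥0∞) + 1)⁻¹
          * ∫⁻ y, h y * P y Dn ∂μ = 0 := le_antisymm hle zero_le
      rcases mul_eq_zero.mp hmul0 with hcase | hcase
      · exact absurd hcase (mul_ne_zero hc0 hn1)
      · exact hcase
    have hgmeas : Measurable fun y => h y * P y Dn :=
      h_meas.mul (hP_meas Dn hDnmeas)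
    have hae := (lintegral_eq_zero_iff hgmeas).mp hint0
    rw [hDeq]
    filter_upwards [hae] with y hy
    have hy' : h y * P y Dn = 0 := hy
    rcases mul_eq_zero.mp hy' with hy0 | hy0
    · have hyΔ : y = Δ := by
        by_contra hne
        exact (ne_of_gt (h_pos y hne).1) hy0
      haveI := hP_prob Δ
      have hsub : Dn ⊆ {ω | X 0 ω = Δ}ᶜ := by
        intro ω hω hc
        have hc' : X 0 ω = Δ := hc
        have hζ : lifetime Δ X ω ≤ ((0 : ℝ≥0) : ℝ≥0∞) := iInf₂_le (0 : ℝ≥0) hc'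
        exact absurd (lt_of_lt_of_le hω.2 (le_trans hζ zero_le)) (lt_irrefl _)
      have hm0 : MeasurableSet[F0inf X] {ω | X 0 ω = Δ} :=
        measSet_preX (measurableSet_singleton Δ)
      have hnull : P Δ {ω | X 0 ω = Δ}ᶜ = 0 := by
        haveI := hP_prob Δ
        rw [measure_compl hm0 (measure_ne_top _ _), measure_univ, hP_start Δ, tsub_self]
      rw [hyΔ]
      exact measure_mono_null hsub hnull
    · exact hy0
  have hall : ∀ᵐ x ∂μ, ∀ (q : ℚ) (n : ℕ), P x (qnSet Δ h X Γ r q n) = 0 := by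
    rw [ae_all_iff]
    intro q
    rw [ae_all_iff]
    exact hstep q
  filter_upwards [hall] with x hx
  refine measure_mono_null ?_
    (measure_iUnion_null fun q : ℚ => measure_iUnion_null fun n : ℕ => hx q n)
  intro ω hω
  obtain ⟨hωΓ, hωζ⟩ := hω
  obtain ⟨q, _, h1, h2⟩ := ENNReal.lt_iff_exists_rat_btwn.mp hωζ
  obtain ⟨n, hn⟩ := ENNReal.exists_nat_gt (hfin (X (q : ℝ).toNNReal ω))
  rw [mem_iUnion]
  refine ⟨q, ?_⟩
  rw [mem_iUnion]
  refine ⟨n, ?_⟩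
  rw [qnSet, if_pos (ENNReal.coe_lt_coe.mp h1)]
  exact ⟨⟨hωΓ, le_trans (le_of_lt hn) le_self_add⟩, h2⟩

/-- Enumeration of the cut points `≤ t`: `t` itself and all rationals `≤ t`. -/
noncomputable def rt (t : ℝ≥0) : Option ℚ → ℝ≥0
  | none => t
  | some q => min (q : ℝ).toNNReal t

lemma rt_le (t : ℝ≥0) : ∀ i, rt t i ≤ t
  | none => le_rfl
  | some _ => min_le_right _ _

lemma sigma_decomp {σ : Ω → ℝ≥0∞} {t : ℝ≥0} {ω : Ω} :
    (σ ω ≤ (t : ℝ≥0∞) ∧ σ ω < lifetime Δ X ω) ↔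
      ∃ i : Option ℚ, σ ω ≤ ((rt t i : ℝ≥0) : ℝ≥0∞)
        ∧ ((rt t i : ℝ≥0) : ℝ≥0∞) < lifetime Δ X ω := by
  constructor
  · rintro ⟨h1, h2⟩
    by_cases ht : (t : ℝ≥0∞) < lifetime Δ X ω
    · exact ⟨none, h1, ht⟩
    · obtain ⟨q, _, hq1, hq2⟩ := ENNReal.lt_iff_exists_rat_btwn.mp h2
      have hqt : (q : ℝ).toNNReal ≤ t := by
        have hle : ((q : ℝ).toNNReal : ℝ≥0∞) ≤ (t : ℝ≥0∞) :=
          le_trans (le_of_lt hq2) (not_lt.mp ht)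
        exact_mod_cast hle
      refine ⟨some q, ?_, ?_⟩
      · show σ ω ≤ ((min (q : ℝ).toNNReal t : ℝ≥0) : ℝ≥0∞)
        rw [min_eq_left hqt]
        exact le_of_lt hq1
      · show ((min (q : ℝ).toNNReal t : ℝ≥0) : ℝ≥0∞) < lifetime Δ X ω
        rw [min_eq_left hqt]
        exact hq2
  · rintro ⟨i, h1, h2⟩
    exact ⟨le_trans h1 (ENNReal.coe_le_coe.mpr (rt_le t i)), lt_of_le_of_lt h1 h2⟩

/-- The main approximation lemma: a countable union `⋃ (E (rt i) ∩ {rt i < ζ})`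
with each `E r ∈ M^μ_r` belongs to `F^{h,μ}_t`. -/
lemma iUnion_mem_Fhmu
    (habs : ∀ (ω : Ω) (s t : ℝ≥0), s ≤ t → X s ω = Δ → X t ω = Δ)
    (hshift : ∀ (s t : ℝ≥0) (ω : Ω), X t (θ s ω) = X (t + s) ω)
    (h_meas : Measurable h) (h_cem : h Δ = 0)
    (h_pos : ∀ x : S, x ≠ Δ → 0 < h x ∧ h x < ∞)
    (hP_prob : ∀ x : S, IsProbabilityMeasure (P x))
    (hP_meas : ∀ Λ : Set Ω, MeasurableSet[F0inf X] Λ → Measurable fun x => P x Λ)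
    (hP_start : ∀ x : S, P x {ω | X 0 ω = x} = 1)
    (hMarkov : ∀ (s : ℝ≥0) (x : S) (Y : Ω → ℝ≥0∞), Measurable[F0inf X] Y →
      ∀ Λ : Set Ω, MeasurableSet[F0plus X s] Λ →
        ∫⁻ ω in Λ, Y (θ s ω) ∂(P x) = ∫⁻ ω in Λ, (∫⁻ ω', Y ω' ∂(P (X s ω))) ∂(P x))
    (μ : Measure S) (t : ℝ≥0) (E : ℝ≥0 → Set Ω)
    (hE : ∀ r : ℝ≥0, r ≤ t → E r ∈ Mmu Δ α h X P μ r) :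
    (⋃ i : Option ℚ, E (rt t i) ∩ {ω | ((rt t i : ℝ≥0) : ℝ≥0∞) < lifetime Δ X ω})
      ∈ Fhmu X P μ t := by
  have hEex : ∀ i : Option ℚ, ∃ Λ' Γ : Set Ω, MeasurableSet[F0 X (rt t i)] Λ' ∧
      MeasurableSet[F0plus X (rt t i)] Γ ∧ symmDiff (E (rt t i)) Λ' ⊆ Γ ∧
      ∀ T : ℝ≥0, rt t i < T → Qmu Δ α h X P μ T Γ = 0 := fun i => hE _ (rt_le t i)
  choose Λ' Γ hΛ' hΓ hsym hQ using hEex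
  set Z : Set Ω := {ω | lifetime Δ X ω ≤ (0 : ℝ≥0∞)} with hZdef
  have hZ : MeasurableSet[F0inf X] Z := measSet_lifetime_le habs 0
  set B : Set S := {y | P y Z ≠ 0} with hBdef
  have hB : MeasurableSet B := (hP_meas Z hZ) (measurableSet_singleton 0).compl
  set Φ : Set Ω := X t ⁻¹' Bᶜ with hΦdef
  set U : Option ℚ → Set Ω := fun i => ⋃ q : ℚ,
    if rt t i < (q : ℝ).toNNReal ∧ (q : ℝ).toNNReal ≤ t
      then X (q : ℝ).toNNReal ⁻¹' ({Δ}ᶜ) else ∅ with hUdef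
  set Nb : Set Ω := ({ω | (t : ℝ≥0∞) < lifetime Δ X ω} ∩ X t ⁻¹' B)
      ∪ ({ω | (t : ℝ≥0∞) < lifetime Δ X ω}ᶜ ∩ X t ⁻¹' Bᶜ) with hNbdef
  have hdecomp : ∀ i, {ω | ((rt t i : ℝ≥0) : ℝ≥0∞) < lifetime Δ X ω}
      = U i ∪ {ω | (t : ℝ≥0∞) < lifetime Δ X ω} := by
    intro i
    ext ω
    simp only [hUdef, mem_union, mem_iUnion, mem_setOf_eq]
    constructor
    · intro hlt
      by_cases ht : (t : ℝ≥0∞) < lifetime Δ X ω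
      · exact Or.inr ht
      · obtain ⟨q, _, hq1, hq2⟩ := ENNReal.lt_iff_exists_rat_btwn.mp hlt
        have hcond : rt t i < (q : ℝ).toNNReal ∧ (q : ℝ).toNNReal ≤ t := by
          constructor
          · exact_mod_cast hq1
          · have hle : ((q : ℝ).toNNReal : ℝ≥0∞) ≤ (t : ℝ≥0∞) :=
              le_trans (le_of_lt hq2) (not_lt.mp ht)
            exact_mod_cast hle
        refine Or.inl ⟨q, ?_⟩
        rw [if_pos hcond]
        exact ne_of_lt_lifetime habs hq2
    · rintro (⟨q, hq⟩ | ht)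
      · by_cases hcond : rt t i < (q : ℝ).toNNReal ∧ (q : ℝ).toNNReal ≤ t
        · rw [if_pos hcond] at hq
          exact lt_of_lt_of_le (ENNReal.coe_lt_coe.mpr hcond.1) (le_lifetime habs hq)
        · rw [if_neg hcond] at hq
          exact absurd hq (notMem_empty ω)
      · exact lt_of_le_of_lt (ENNReal.coe_le_coe.mpr (rt_le t i)) ht
  have hUsub : ∀ i, U i ⊆ {ω | ((rt t i : ℝ≥0) : ℝ≥0∞) < lifetime Δ X ω} := by
    intro i ω hω
    rw [hdecomp i]
    exact Or.inl hω
  have hUmeas : ∀ i, MeasurableSet[F0 X t] (U i) := by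
    intro i
    refine MeasurableSet.iUnion fun q => ?_
    by_cases hcond : rt t i < (q : ℝ).toNNReal ∧ (q : ℝ).toNNReal ≤ t
    · rw [if_pos hcond]
      exact measSet_preX_F0 hcond.2 (measurableSet_singleton Δ).compl
    · rw [if_neg hcond]
      exact @MeasurableSet.empty Ω (F0 X t)
  have hΦmeas : MeasurableSet[F0 X t] Φ := measSet_preX_F0 le_rfl hB.compl
  refine ⟨⋃ i, Λ' i ∩ (U i ∪ Φ),
    (⋃ i, Γ i ∩ {ω | ((rt t i : ℝ≥0) : ℝ≥0∞) < lifetime Δ X ω}) ∪ Nb, ?_, ?_, ?_, ?_⟩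
  · exact MeasurableSet.iUnion fun i =>
      ((F0_mono (rt_le t i)) _ (hΛ' i)).inter ((hUmeas i).union hΦmeas)
  · refine MeasurableSet.union ?_ ?_
    · exact MeasurableSet.iUnion fun i =>
        ((F0plus_le_F0inf (rt t i)) _ (hΓ i)).inter (measSet_lt_lifetime habs _)
    · refine MeasurableSet.union ?_ ?_
      · exact (measSet_lt_lifetime habs _).inter (measSet_preX hB)
      · exact (measSet_lt_lifetime habs _).compl.inter (measSet_preX hB.compl)
  · intro ω hω
    rw [Set.mem_symmDiff] at hω
    rcases hω with ⟨hmem, hnot⟩ | ⟨hmem, hnot⟩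
    · obtain ⟨i, hEi, hζi⟩ := mem_iUnion.mp hmem
      have hR : ω ∉ Λ' i ∩ (U i ∪ Φ) := fun hc => hnot (mem_iUnion.mpr ⟨i, hc⟩)
      by_cases hΛm : ω ∈ Λ' i
      · have hnUΦ : ω ∉ U i ∪ Φ := fun hc => hR ⟨hΛm, hc⟩
        have htζ : ω ∈ {ω | (t : ℝ≥0∞) < lifetime Δ X ω} := by
          have hmem2 : ω ∈ U i ∪ {ω | (t : ℝ≥0∞) < lifetime Δ X ω} := by
            rw [← hdecomp i]; exact hζi
          rcases hmem2 with hc | hc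
          · exact absurd (Or.inl hc) hnUΦ
          · exact hc
        have hXB : ω ∈ X t ⁻¹' B := by
          have hnΦ : ω ∉ Φ := fun hc => hnUΦ (Or.inr hc)
          exact not_not.mp hnΦ
        exact Or.inr (Or.inl ⟨htζ, hXB⟩)
      · have hΓi : ω ∈ Γ i := hsym i (Set.mem_symmDiff.mpr (Or.inl ⟨hEi, hΛm⟩))
        exact Or.inl (mem_iUnion.mpr ⟨i, hΓi, hζi⟩)
    · obtain ⟨i, hΛi, hUΦ⟩ := mem_iUnion.mp hmem
      have hnL : ω ∉ E (rt t i) ∩ {ω | ((rt t i : ℝ≥0) : ℝ≥0∞) < lifetime Δ X ω} :=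
        fun hc => hnot (mem_iUnion.mpr ⟨i, hc⟩)
      have hviaΓ : ω ∈ {ω | ((rt t i : ℝ≥0) : ℝ≥0∞) < lifetime Δ X ω} →
          ω ∈ (⋃ i, Γ i ∩ {ω | ((rt t i : ℝ≥0) : ℝ≥0∞) < lifetime Δ X ω}) ∪ Nb := by
        intro hζi
        have hnE : ω ∉ E (rt t i) := fun hc => hnL ⟨hc, hζi⟩
        have hΓi : ω ∈ Γ i := hsym i (Set.mem_symmDiff.mpr (Or.inr ⟨hΛi, hnE⟩))
        exact Or.inl (mem_iUnion.mpr ⟨i, hΓi, hζi⟩)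
      rcases hUΦ with hU | hΦm
      · exact hviaΓ (hUsub i hU)
      · by_cases htζ : ω ∈ {ω | (t : ℝ≥0∞) < lifetime Δ X ω}
        · exact hviaΓ (lt_of_le_of_lt (ENNReal.coe_le_coe.mpr (rt_le t i)) htζ)
        · exact Or.inr (Or.inr ⟨htζ, hΦm⟩)
  · have h1 : ∀ i : Option ℚ, ∀ᵐ x ∂μ,
        P x (Γ i ∩ {ω | ((rt t i : ℝ≥0) : ℝ≥0∞) < lifetime Δ X ω}) = 0 :=
      fun i => qnull_pnull habs h_meas h_cem h_pos hP_prob hP_meas hP_start μ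
        ((F0plus_le_F0inf (rt t i)) _ (hΓ i)) (hQ i)
    have h2 : ∀ᵐ x ∂μ, P x
        ((⋃ i, Γ i ∩ {ω | ((rt t i : ℝ≥0) : ℝ≥0∞) < lifetime Δ X ω}) ∪ Nb) = 0 := by
      filter_upwards [ae_all_iff.mpr h1] with x hx
      refine measure_union_null (measure_iUnion_null hx) ?_
      exact nbad_null habs hshift hP_prob hP_meas hP_start hMarkov t x
    have h3 : ∫⁻ x, P x
        ((⋃ i, Γ i ∩ {ω | ((rt t i : ℝ≥0) : ℝ≥0∞) < lifetime Δ X ω}) ∪ Nb) ∂μ = 0 := by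
      rw [lintegral_congr_ae h2]
      exact lintegral_zero
    exact h3


end Meas


theorem sigma_zeta_is_Fhmu_stopping_time
    {S : Type*} [MeasurableSpace S] [TopologicalSpace S] [BorelSpace S]
    [StandardBorelSpace S] {Ω : Type*} (Δ : S)
    (X : ℝ≥0 → Ω → S) (θ : ℝ≥0 → Ω → Ω) (P : S → @Measure Ω (F0inf X))
    (h : S → ℝ≥0∞) (α : ℝ) (hα : 0 < α)
    (h_meas : Measurable h) (h_cem : h Δ = 0)
    (h_pos : ∀ x : S, x ≠ Δ → 0 < h x ∧ h x < ∞)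
    (hX_rc : ∀ (ω : Ω) (t : ℝ≥0),
      Filter.Tendsto (fun s => X s ω) (nhdsWithin t (Set.Ioi t)) (nhds (X t ω)))
    (hX_absorb : ∀ (ω : Ω) (s t : ℝ≥0), s ≤ t → X s ω = Δ → X t ω = Δ)
    (hshift : ∀ (s t : ℝ≥0) (ω : Ω), X t (θ s ω) = X (t + s) ω)
    (hP_prob : ∀ x : S, IsProbabilityMeasure (P x))
    (hP_meas : ∀ Λ : Set Ω, MeasurableSet[F0inf X] Λ → Measurable fun x => P x Λ)
    (hP_start : ∀ x : S, P x {ω | X 0 ω = x} = 1)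
    (hMarkov : ∀ (s : ℝ≥0) (x : S) (Y : Ω → ℝ≥0∞), Measurable[F0inf X] Y →
      ∀ Λ : Set Ω, MeasurableSet[F0plus X s] Λ →
        ∫⁻ ω in Λ, Y (θ s ω) ∂(P x)
          = ∫⁻ ω in Λ, (∫⁻ ω', Y ω' ∂(P (X s ω))) ∂(P x))
    :
    ∀ (μ : Measure S), IsProbabilityMeasure μ →
    ∀ σ : Ω → ℝ≥0∞, (∀ t : ℝ≥0, {ω | σ ω ≤ (t : ℝ≥0∞)} ∈ Mmu Δ α h X P μ t) →
      (∀ t : ℝ≥0,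
        {ω | (if σ ω < lifetime Δ X ω then σ ω else ∞) ≤ (t : ℝ≥0∞)}
          ∈ Fhmu X P μ t) ∧
      ∀ Λ ∈ Mmusigma Δ α h X P μ σ,
        (Λ ∩ {ω | σ ω < lifetime Δ X ω})
          ∈ FhmuStop X P μ fun ω => if σ ω < lifetime Δ X ω then σ ω else ∞ := by
  intro μ hμ σ hσ
  haveI : MeasurableSingletonClass S := inferInstance
  have hiff : ∀ (t : ℝ≥0) (ω : Ω),
      (σ ω ≤ (t : ℝ≥0∞) ∧ σ ω < lifetime Δ X ω) ↔
        ∃ i : Option ℚ, σ ω ≤ ((rt t i : ℝ≥0) : ℝ≥0∞)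
          ∧ ((rt t i : ℝ≥0) : ℝ≥0∞) < lifetime Δ X ω :=
    fun t ω => sigma_decomp
  constructor
  · intro t
    have hset : {ω | (if σ ω < lifetime Δ X ω then σ ω else ∞) ≤ (t : ℝ≥0∞)}
        = ⋃ i : Option ℚ, {ω | σ ω ≤ ((rt t i : ℝ≥0) : ℝ≥0∞)}
            ∩ {ω | ((rt t i : ℝ≥0) : ℝ≥0∞) < lifetime Δ X ω} := by
      ext ω
      rw [mem_setOf_eq, mem_iUnion]
      constructor
      · intro hle
        by_cases hσζ : σ ω < lifetime Δ X ω
        · rw [if_pos hσζ] at hle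
          obtain ⟨i, hi1, hi2⟩ := (hiff t ω).mp ⟨hle, hσζ⟩
          exact ⟨i, hi1, hi2⟩
        · rw [if_neg hσζ] at hle
          exact absurd hle (by simp)
      · rintro ⟨i, hi1, hi2⟩
        have h12 := (hiff t ω).mpr ⟨i, hi1, hi2⟩
        rw [if_pos h12.2]
        exact h12.1
    rw [hset]
    exact iUnion_mem_Fhmu hX_absorb hshift h_meas h_cem h_pos hP_prob hP_meas hP_start
      hMarkov μ t (fun r => {ω | σ ω ≤ (r : ℝ≥0∞)}) (fun r _ => hσ r)
  · intro Λ hΛ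
    intro t
    have hset : (Λ ∩ {ω | σ ω < lifetime Δ X ω})
          ∩ {ω | (if σ ω < lifetime Δ X ω then σ ω else ∞) ≤ (t : ℝ≥0∞)}
        = ⋃ i : Option ℚ, (Λ ∩ {ω | σ ω ≤ ((rt t i : ℝ≥0) : ℝ≥0∞)})
            ∩ {ω | ((rt t i : ℝ≥0) : ℝ≥0∞) < lifetime Δ X ω} := by
      ext ω
      rw [mem_iUnion]
      constructor
      · rintro ⟨⟨hωΛ, hσζ⟩, hle⟩
        have hσζ' : σ ω < lifetime Δ X ω := hσζ
        rw [mem_setOf_eq, if_pos hσζ'] at hle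
        obtain ⟨i, hi1, hi2⟩ := (hiff t ω).mp ⟨hle, hσζ'⟩
        exact ⟨i, ⟨hωΛ, hi1⟩, hi2⟩
      · rintro ⟨i, ⟨hωΛ, hi1⟩, hi2⟩
        have h12 := (hiff t ω).mpr ⟨i, hi1, hi2⟩
        refine ⟨⟨hωΛ, h12.2⟩, ?_⟩
        rw [mem_setOf_eq, if_pos h12.2]
        exact h12.1
    rw [hset]
    exact iUnion_mem_Fhmu hX_absorb hshift h_meas h_cem h_pos hP_prob hP_meas hP_start
      hMarkov μ t (fun r => Λ ∩ {ω | σ ω ≤ (r : ℝ≥0∞)}) (fun r _ => hΛ.2 r)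
end

section
/- Let μ be a probability measure on E_Δ and σ an (M^μ_t)_{t≥0}-stopping time. If Λ ∈ M^μ_σ satisfies P^h_μ(Λ; σ<ζ) = 0, then for every subset Λ' ⊂ Λ one has Λ' ∩ {σ < ζ} ∈ M^μ_σ. -/
open MeasureTheory Set Filter
open scoped NNReal ENNReal

section Aux

open MeasureTheory

private lemma setLIntegral_zero_of_null {Ω : Type*} [MeasurableSpace Ω] (ν : Measure Ω)
    {Z B : Set Ω} (hZ : MeasurableSet Z) {f : Ω → ℝ≥0∞}
    (hf : ∀ ω ∉ B, f ω = 0) (h0 : ν (B ∩ Z) = 0) : ∫⁻ ω in Z, f ω ∂ν = 0 := by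
  obtain ⟨N, hNsub, hNm, hN0⟩ := exists_measurable_superset_of_null h0
  refine le_antisymm ?_ zero_le
  have hpt : ∀ ω, Z.indicator f ω ≤ N.indicator (fun _ => (⊤ : ℝ≥0∞)) ω := by
    intro ω
    by_cases hωZ : ω ∈ Z
    · by_cases hωN : ω ∈ N
      · simp [Set.indicator_of_mem hωN]
      · have hωB : ω ∉ B := fun hb => hωN (hNsub ⟨hb, hωZ⟩)
        simp [Set.indicator_of_mem hωZ, hf ω hωB, Set.indicator_of_notMem hωN]
    · simp [Set.indicator_of_notMem hωZ]
  calc ∫⁻ ω in Z, f ω ∂ν = ∫⁻ ω, Z.indicator f ω ∂ν := (lintegral_indicator hZ f).symm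
    _ ≤ ∫⁻ ω, N.indicator (fun _ => (⊤ : ℝ≥0∞)) ω ∂ν := lintegral_mono hpt
    _ = ⊤ * ν N := lintegral_indicator_const hNm ⊤
    _ = 0 := by rw [hN0, mul_zero]

private lemma null_of_setLIntegral_zero {Ω : Type*} [MeasurableSpace Ω] (ν : Measure Ω)
    {Z Γ : Set Ω} (hΓ : MeasurableSet Γ) {f : Ω → ℝ≥0∞} (hf : Measurable f)
    (hpos : ∀ ω ∈ Γ, f ω ≠ 0) (h0 : ∫⁻ ω in Z, f ω ∂ν = 0) : ν (Γ ∩ Z) = 0 := by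
  have hae : f =ᵐ[ν.restrict Z] 0 := (lintegral_eq_zero_iff hf).1 h0
  have h1 : ν.restrict Z {ω | f ω ≠ 0} = 0 := by
    rw [Filter.EventuallyEq, ae_iff] at hae
    simpa using hae
  have h2 : ν.restrict Z Γ = 0 := measure_mono_null (fun ω hω => hpos ω hω) h1
  rwa [Measure.restrict_apply hΓ] at h2

end Aux


theorem null_sets_before_lifetime_in_Mmusigma
    {S : Type*} [MeasurableSpace S] [TopologicalSpace S] [BorelSpace S]
    [StandardBorelSpace S] {Ω : Type*} (Δ : S)
    (X : ℝ≥0 → Ω → S) (θ : ℝ≥0 → Ω → Ω) (P : S → @Measure Ω (F0inf X))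
    (h : S → ℝ≥0∞) (α : ℝ) (hα : 0 < α)
    (h_meas : Measurable h) (h_cem : h Δ = 0)
    (h_pos : ∀ x : S, x ≠ Δ → 0 < h x ∧ h x < ∞)
    (hX_rc : ∀ (ω : Ω) (t : ℝ≥0),
      Filter.Tendsto (fun s => X s ω) (nhdsWithin t (Set.Ioi t)) (nhds (X t ω)))
    (hX_absorb : ∀ (ω : Ω) (s t : ℝ≥0), s ≤ t → X s ω = Δ → X t ω = Δ)
    (hshift : ∀ (s t : ℝ≥0) (ω : Ω), X t (θ s ω) = X (t + s) ω)
    (hP_prob : ∀ x : S, IsProbabilityMeasure (P x))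
    (hP_meas : ∀ Λ : Set Ω, MeasurableSet[F0inf X] Λ → Measurable fun x => P x Λ)
    (hP_start : ∀ x : S, P x {ω | X 0 ω = x} = 1)
    (hMarkov : ∀ (s : ℝ≥0) (x : S) (Y : Ω → ℝ≥0∞), Measurable[F0inf X] Y →
      ∀ Λ : Set Ω, MeasurableSet[F0plus X s] Λ →
        ∫⁻ ω in Λ, Y (θ s ω) ∂(P x)
          = ∫⁻ ω in Λ, (∫⁻ ω', Y ω' ∂(P (X s ω))) ∂(P x))
    :
    ∀ (μ : Measure S), IsProbabilityMeasure μ →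
    ∀ σ : Ω → ℝ≥0∞, (∀ t : ℝ≥0, {ω | σ ω ≤ (t : ℝ≥0∞)} ∈ Mmu Δ α h X P μ t) →
    ∀ Λ ∈ Mmusigma Δ α h X P μ σ,
      Pmu X P μ (Λ ∩ {ω | σ ω < lifetime Δ X ω}) = 0 →
      ∀ Λ' ⊆ Λ, (Λ' ∩ {ω | σ ω < lifetime Δ X ω}) ∈ Mmusigma Δ α h X P μ σ := by
  intro μ hμ σ hσ Λ hΛ hnull Λ' hΛ'sub
  letI : MeasurableSpace Ω := F0inf X
  have hXm : ∀ u : ℝ≥0, Measurable (X u) := fun u =>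
    measurable_iff_comap_le.2 (le_iSup (fun s => MeasurableSpace.comap (X s) inferInstance) u)
  have hF0_mono : ∀ {a b : ℝ≥0}, a ≤ b → F0 X a ≤ F0 X b := by
    intro a b hab
    refine iSup₂_le fun u hu => ?_
    exact le_iSup₂ (f := fun s (_ : s ∈ Set.Iic b) => MeasurableSpace.comap (X s) inferInstance)
      u (Set.mem_Iic.2 ((Set.mem_Iic.1 hu).trans hab))
  have hF0_le_inf : ∀ t : ℝ≥0, F0 X t ≤ F0inf X := fun t =>
    iSup₂_le fun u _ => le_iSup (fun s => MeasurableSpace.comap (X s) inferInstance) u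
  have hF0_le_plus : ∀ t : ℝ≥0, F0 X t ≤ F0plus X t := fun t =>
    le_iInf₂ fun u hu => hF0_mono (le_of_lt hu)
  have hF0plus_le_inf : ∀ t : ℝ≥0, F0plus X t ≤ F0inf X := fun t =>
    le_trans (iInf₂_le (t + 1) (Set.mem_Ioi.2 (lt_add_of_pos_right t one_pos)))
      (hF0_le_inf (t + 1))
  have h_ne_top : ∀ y : S, h y ≠ ∞ := by
    intro y
    by_cases hy : y = Δ
    · simp [hy, h_cem]
    · exact (h_pos y hy).2.ne
  -- the survival set is measurable
  have hZeq : ∀ T : ℝ≥0, {ω | (T : ℝ≥0∞) < lifetime Δ X ω}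
      = ⋃ n : ℕ, {ω | X (T + 1 / ((n : ℝ≥0) + 1)) ω ≠ Δ} := by
    intro T
    ext ω
    simp only [Set.mem_setOf_eq, Set.mem_iUnion]
    constructor
    · intro hT
      obtain ⟨s, hTs, hsl⟩ := ENNReal.lt_iff_exists_nnreal_btwn.1 hT
      have hTs' : T < s := by exact_mod_cast hTs
      have hXs : X s ω ≠ Δ := by
        intro hXs
        have hle : lifetime Δ X ω ≤ (s : ℝ≥0∞) :=
          iInf_le_of_le s (iInf_le _ hXs)
        exact absurd hle (not_le.2 hsl)
      obtain ⟨n, hn⟩ := exists_nat_one_div_lt (tsub_pos_of_lt hTs')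
      refine ⟨n, fun hX => hXs (hX_absorb ω _ s ?_ hX)⟩
      have h1 : T + 1 / ((n : ℝ≥0) + 1) ≤ T + (s - T) := add_le_add_right hn.le T
      rwa [add_tsub_cancel_of_le hTs'.le] at h1
    · rintro ⟨n, hn⟩
      have hpos : (0 : ℝ≥0) < 1 / ((n : ℝ≥0) + 1) := by positivity
      have hle : ((T + 1 / ((n : ℝ≥0) + 1) : ℝ≥0) : ℝ≥0∞) ≤ lifetime Δ X ω := by
        refine le_iInf fun u => le_iInf fun hu => ?_
        exact ENNReal.coe_le_coe.2 (le_of_not_gt fun hlt => hn (hX_absorb ω u _ hlt.le hu))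
      calc (T : ℝ≥0∞) < ((T + 1 / ((n : ℝ≥0) + 1) : ℝ≥0) : ℝ≥0∞) := by
            exact_mod_cast lt_add_of_pos_right T hpos
        _ ≤ _ := hle
  have hZmeas : ∀ T : ℝ≥0, MeasurableSet {ω | (T : ℝ≥0∞) < lifetime Δ X ω} := by
    intro T
    rw [hZeq T]
    refine MeasurableSet.iUnion fun n => ?_
    have heq : {ω | X (T + 1 / ((n : ℝ≥0) + 1)) ω ≠ Δ}
        = X (T + 1 / ((n : ℝ≥0) + 1)) ⁻¹' {Δ}ᶜ := by
      ext ω; simp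
    rw [heq]
    exact (hXm _) (measurableSet_singleton Δ).compl
  -- the key step: membership in `Mmu` at each time `t`
  have key : ∀ t : ℝ≥0,
      ((Λ' ∩ {ω | σ ω < lifetime Δ X ω}) ∩ {ω | σ ω ≤ (t : ℝ≥0∞)}) ∈ Mmu Δ α h X P μ t := by
    intro t
    obtain ⟨Λ₁, Γ₁, hΛ₁, hΓ₁, hsym, hQ⟩ := hΛ.2 t
    have hΛ₁' : MeasurableSet Λ₁ := hF0_le_inf t _ hΛ₁
    have hΓ₁' : MeasurableSet Γ₁ := hF0plus_le_inf t _ hΓ₁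
    refine ⟨∅, Λ₁ ∪ Γ₁, @MeasurableSet.empty Ω (F0 X t),
      MeasurableSet.union (hF0_le_plus t _ hΛ₁) hΓ₁, ?_, ?_⟩
    · intro ω hω
      have hω' : ω ∈ (Λ' ∩ {ω | σ ω < lifetime Δ X ω}) ∩ {ω | σ ω ≤ (t : ℝ≥0∞)} := by
        simpa [Set.symmDiff_def] using hω
      obtain ⟨⟨hΛ'ω, _⟩, hσt⟩ := hω'
      by_cases hω₁ : ω ∈ Λ₁
      · exact Set.mem_union_left _ hω₁
      · exact Set.mem_union_right _
          (hsym (Set.mem_symmDiff.2 (Or.inl ⟨⟨hΛ'sub hΛ'ω, hσt⟩, hω₁⟩)))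
    · intro T hT
      set Z : Set Ω := {ω | (T : ℝ≥0∞) < lifetime Δ X ω} with hZdef
      have hZm : MeasurableSet Z := hZmeas T
      have hφm : ∀ B : Set Ω, MeasurableSet B → Measurable fun ω =>
          ENNReal.ofReal (Real.exp (α * (T : ℝ))) * B.indicator (1 : Ω → ℝ≥0∞) ω
            * (h (X T ω))⁻¹ :=
        fun B hB => (measurable_const.mul (measurable_one.indicator hB)).mul
          ((h_meas.comp (hXm T)).inv)
      have hQeq : ∀ (x : S) (B : Set Ω), QbarSet Δ α h X P x T B
          = h x * ∫⁻ ω in Z, ENNReal.ofReal (Real.exp (α * (T : ℝ)))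
              * B.indicator (1 : Ω → ℝ≥0∞) ω * (h (X T ω))⁻¹ ∂(P x) := fun x B => rfl
      have hQmeas : ∀ B : Set Ω, MeasurableSet B →
          Measurable fun x => QbarSet Δ α h X P x T B := by
        intro B hB
        have h1 : Measurable fun x : S => P x :=
          Measure.measurable_of_measurable_coe _ hP_meas
        have h2 : Measurable fun m : Measure Ω => ∫⁻ ω, Z.indicator
            (fun ω => ENNReal.ofReal (Real.exp (α * (T : ℝ)))
              * B.indicator (1 : Ω → ℝ≥0∞) ω * (h (X T ω))⁻¹) ω ∂m :=
          Measure.measurable_lintegral ((hφm B hB).indicator hZm)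
        have h3 : Measurable fun x : S => ∫⁻ ω, Z.indicator
            (fun ω => ENNReal.ofReal (Real.exp (α * (T : ℝ)))
              * B.indicator (1 : Ω → ℝ≥0∞) ω * (h (X T ω))⁻¹) ω ∂(P x) := h2.comp h1
        have h4 := h_meas.mul h3
        have h5 : (fun x => QbarSet Δ α h X P x T B) = fun x => h x * ∫⁻ ω, Z.indicator
            (fun ω => ENNReal.ofReal (Real.exp (α * (T : ℝ)))
              * B.indicator (1 : Ω → ℝ≥0∞) ω * (h (X T ω))⁻¹) ω ∂(P x) := by
          funext x
          rw [hQeq x B, lintegral_indicator hZm]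
        rw [h5]
        exact h4
      have hkey0 : ∀ (x : S) (B : Set Ω), P x (B ∩ Z) = 0 →
          QbarSet Δ α h X P x T B = 0 := by
        intro x B h0
        have hz : ∫⁻ ω in Z, ENNReal.ofReal (Real.exp (α * (T : ℝ)))
            * B.indicator (1 : Ω → ℝ≥0∞) ω * (h (X T ω))⁻¹ ∂(P x) = 0 := by
          refine setLIntegral_zero_of_null (P x) hZm (fun ω hω => ?_) h0
          simp [Set.indicator_of_notMem hω]
        rw [hQeq x B, hz, mul_zero]
      -- the Γ₁ part is null
      have hae1 : ∀ᵐ x ∂μ, h x = 0 ∨ P x (Γ₁ ∩ Z) = 0 := by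
        have h0 : ∫⁻ x, QbarSet Δ α h X P x T Γ₁ ∂μ = 0 := hQ T hT
        have hae := (lintegral_eq_zero_iff (hQmeas Γ₁ hΓ₁')).1 h0
        filter_upwards [hae] with x hx
        have hx2 : h x * (∫⁻ ω in Z, ENNReal.ofReal (Real.exp (α * (T : ℝ)))
            * Γ₁.indicator (1 : Ω → ℝ≥0∞) ω * (h (X T ω))⁻¹ ∂(P x)) = 0 :=
          (hQeq x Γ₁).symm.trans hx
        rcases mul_eq_zero.1 hx2 with h1 | h2
        · exact Or.inl h1
        · right
          refine null_of_setLIntegral_zero (P x) hΓ₁' (hφm Γ₁ hΓ₁') (fun ω hω => ?_) h2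
          simp only [Set.indicator_of_mem hω, Pi.one_apply, mul_one]
          exact mul_ne_zero (ENNReal.ofReal_pos.2 (Real.exp_pos _)).ne'
            (ENNReal.inv_ne_zero.2 (h_ne_top _))
      -- the Λ₁ part is null
      have hsm : MeasurableSet {y : S | h y ≠ 0} := by
        have heq : {y : S | h y ≠ 0} = (h ⁻¹' {0})ᶜ := by ext y; simp
        rw [heq]
        exact (h_meas (measurableSet_singleton 0)).compl
      have hGmeas : Measurable fun x => P x (Γ₁ ∩ Z) := hP_meas _ (hΓ₁'.inter hZm)
      have hLmeas : Measurable fun x => P x (Λ₁ ∩ Z) := hP_meas _ (hΛ₁'.inter hZm)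
      have hindG : Measurable ({y : S | h y ≠ 0}.indicator fun x => P x (Γ₁ ∩ Z)) :=
        hGmeas.indicator hsm
      have hindL : Measurable ({y : S | h y ≠ 0}.indicator fun x => P x (Λ₁ ∩ Z)) :=
        hLmeas.indicator hsm
      have hsubset : Λ₁ ∩ Z ⊆ ((Λ ∩ {ω | σ ω ≤ (t : ℝ≥0∞)}) ∩ Z) ∪ (Γ₁ ∩ Z) := by
        rintro ω ⟨hω₁, hωZ⟩
        by_cases hωΛ : ω ∈ Λ ∩ {ω | σ ω ≤ (t : ℝ≥0∞)}
        · exact Set.mem_union_left _ ⟨hωΛ, hωZ⟩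
        · exact Set.mem_union_right _
            ⟨hsym (Set.mem_symmDiff.2 (Or.inr ⟨hω₁, hωΛ⟩)), hωZ⟩
      have hsub2 : (Λ ∩ {ω | σ ω ≤ (t : ℝ≥0∞)}) ∩ Z
          ⊆ Λ ∩ {ω | σ ω < lifetime Δ X ω} := by
        rintro ω ⟨⟨hωΛ, hωσ⟩, hωZ⟩
        exact ⟨hωΛ, lt_trans (lt_of_le_of_lt hωσ (ENNReal.coe_lt_coe.2 hT)) hωZ⟩
      have hbound : ∀ x, ({y : S | h y ≠ 0}.indicator fun x => P x (Λ₁ ∩ Z)) x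
          ≤ ({y : S | h y ≠ 0}.indicator fun x => P x (Γ₁ ∩ Z)) x
            + P x (Λ ∩ {ω | σ ω < lifetime Δ X ω}) := by
        intro x
        by_cases hx : x ∈ {y : S | h y ≠ 0}
        · simp only [Set.indicator_of_mem hx]
          calc P x (Λ₁ ∩ Z) ≤ P x (((Λ ∩ {ω | σ ω ≤ (t : ℝ≥0∞)}) ∩ Z) ∪ (Γ₁ ∩ Z)) :=
                measure_mono hsubset
            _ ≤ P x ((Λ ∩ {ω | σ ω ≤ (t : ℝ≥0∞)}) ∩ Z) + P x (Γ₁ ∩ Z) :=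
                measure_union_le _ _
            _ ≤ P x (Λ ∩ {ω | σ ω < lifetime Δ X ω}) + P x (Γ₁ ∩ Z) :=
                add_le_add_left (measure_mono hsub2) _
            _ = P x (Γ₁ ∩ Z) + P x (Λ ∩ {ω | σ ω < lifetime Δ X ω}) := add_comm _ _
        · simp only [Set.indicator_of_notMem hx]
          exact zero_le
      have hindGzero : ∫⁻ x, ({y : S | h y ≠ 0}.indicator fun x => P x (Γ₁ ∩ Z)) x ∂μ = 0 := by
        refine (lintegral_eq_zero_iff hindG).2 ?_
        filter_upwards [hae1] with x hx
        rcases hx with h1 | h2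
        · have : x ∉ {y : S | h y ≠ 0} := by simp [h1]
          simp [Set.indicator_of_notMem this]
        · by_cases hx' : x ∈ {y : S | h y ≠ 0}
          · simp [Set.indicator_of_mem hx', h2]
          · simp [Set.indicator_of_notMem hx']
      have hintzero : ∫⁻ x, ({y : S | h y ≠ 0}.indicator fun x => P x (Λ₁ ∩ Z)) x ∂μ = 0 := by
        refine le_antisymm ?_ zero_le
        calc ∫⁻ x, ({y : S | h y ≠ 0}.indicator fun x => P x (Λ₁ ∩ Z)) x ∂μ
            ≤ ∫⁻ x, (({y : S | h y ≠ 0}.indicator fun x => P x (Γ₁ ∩ Z)) x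
              + P x (Λ ∩ {ω | σ ω < lifetime Δ X ω})) ∂μ := lintegral_mono hbound
          _ = (∫⁻ x, ({y : S | h y ≠ 0}.indicator fun x => P x (Γ₁ ∩ Z)) x ∂μ)
              + ∫⁻ x, P x (Λ ∩ {ω | σ ω < lifetime Δ X ω}) ∂μ :=
            lintegral_add_left hindG _
          _ = 0 + 0 := by
              have hnull' : ∫⁻ x, P x (Λ ∩ {ω | σ ω < lifetime Δ X ω}) ∂μ = 0 := hnull
              rw [hindGzero, hnull']
          _ = 0 := add_zero 0
      have hae2 : ∀ᵐ x ∂μ, h x = 0 ∨ P x (Λ₁ ∩ Z) = 0 := by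
        have hae := (lintegral_eq_zero_iff hindL).1 hintzero
        filter_upwards [hae] with x hx
        by_cases hx0 : h x = 0
        · exact Or.inl hx0
        · right
          have hxmem : x ∈ {y : S | h y ≠ 0} := hx0
          rw [Set.indicator_of_mem hxmem] at hx
          exact hx
      -- conclude
      have haeQ : ∀ᵐ x ∂μ, QbarSet Δ α h X P x T (Λ₁ ∪ Γ₁) = 0 := by
        filter_upwards [hae1, hae2] with x h1 h2
        by_cases hx0 : h x = 0
        · rw [hQeq x (Λ₁ ∪ Γ₁), hx0, zero_mul]
        · have hG := h1.resolve_left hx0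
          have hL := h2.resolve_left hx0
          refine hkey0 x (Λ₁ ∪ Γ₁) (le_antisymm ?_ zero_le)
          calc P x ((Λ₁ ∪ Γ₁) ∩ Z) = P x ((Λ₁ ∩ Z) ∪ (Γ₁ ∩ Z)) := by
                rw [Set.union_inter_distrib_right]
            _ ≤ P x (Λ₁ ∩ Z) + P x (Γ₁ ∩ Z) := measure_union_le _ _
            _ = 0 := by rw [hL, hG, add_zero]
      have : (fun x => QbarSet Δ α h X P x T (Λ₁ ∪ Γ₁)) =ᵐ[μ] fun _ => (0 : ℝ≥0∞) := haeQ
      calc Qmu Δ α h X P μ T (Λ₁ ∪ Γ₁)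
          = ∫⁻ x, QbarSet Δ α h X P x T (Λ₁ ∪ Γ₁) ∂μ := rfl
        _ = ∫⁻ _, (0 : ℝ≥0∞) ∂μ := lintegral_congr_ae this
        _ = 0 := lintegral_zero
  refine ⟨?_, fun t => key t⟩
  have hunion : Λ' ∩ {ω | σ ω < lifetime Δ X ω}
      = ⋃ n : ℕ, ((Λ' ∩ {ω | σ ω < lifetime Δ X ω})
          ∩ {ω | σ ω ≤ (((n : ℝ≥0)) : ℝ≥0∞)}) := by
    ext ω
    simp only [Set.mem_iUnion, Set.mem_inter_iff, Set.mem_setOf_eq]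
    constructor
    · rintro ⟨hΛ'ω, hζ⟩
      have hne : σ ω ≠ ⊤ := (lt_of_lt_of_le hζ le_top).ne
      obtain ⟨n, hn⟩ := ENNReal.exists_nat_gt hne
      exact ⟨n, ⟨hΛ'ω, hζ⟩, by simpa using hn.le⟩
    · rintro ⟨n, ⟨h1, h2⟩, _⟩
      exact ⟨h1, h2⟩
  rw [hunion]
  exact MeasurableSet.iUnion fun n =>
    MeasurableSpace.measurableSet_generateFrom ⟨(n : ℝ≥0), key (n : ℝ≥0)⟩
end
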